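/- Let B ∈ ℝ^{n×n}, let Q ∈ ℝ^{n×ℓ} satisfy QᵀQ = I_ℓ, and let C ∈ ℝ^{ℓ×ℓ} be arbitrary. Then ‖B − QCQᵀ‖_F² = ‖B − QQᵀBQQᵀ‖_F² + ‖QᵀBQ − C‖_F². Consequently, among all matrices of the form QCQᵀ with rank(C) ≤ k, the Frobenius distance ‖B − QCQᵀ‖_F is minimized by C = (QᵀBQ)_(k), a best rank-k approximation of QᵀBQ. -/

import Mathlib

open Matrix BigOperators

/-- `M = U * diagonal μ * Uᵀ` is a spectral (eigen)decomposition of the symmetric matrix `M`,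
with orthogonal `U` and eigenvalues `μ` listed in nonincreasing order. -/
def IsSpectralDecomp {n : ℕ} (M U : Matrix (Fin n) (Fin n) ℝ) (μ : Fin n → ℝ) : Prop :=
  Uᵀ * U = 1 ∧ Antitone μ ∧ M = U * Matrix.diagonal μ * Uᵀ

/-- Truncation of a spectral decomposition to its `k` largest (first `k`) eigenvalues:
the best rank-`k` approximation `M_(k)` associated with the decomposition `(U, μ)`. -/
noncomputable def trunc {n : ℕ} (k : ℕ) (U : Matrix (Fin n) (Fin n) ℝ) (μ : Fin n → ℝ) :
    Matrix (Fin n) (Fin n) ℝ :=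
  U * Matrix.diagonal (fun i : Fin n => if (i : ℕ) < k then μ i else 0) * Uᵀ

/-- `f` is operator monotone on SPSD matrices: for all `m` and all `m × m` SPSD matrices
`B ⪰ C ⪰ 0`, one has `f(B) ⪰ f(C)`, where matrix functions are computed through (any)
spectral decomposition. -/
def OperatorMonotone (f : ℝ → ℝ) : Prop :=
  ∀ (m : ℕ) (B C U V : Matrix (Fin m) (Fin m) ℝ) (β γ : Fin m → ℝ),
    IsSpectralDecomp B U β → IsSpectralDecomp C V γ →
    B.PosSemidef → C.PosSemidef → (B - C).PosSemidef →
    (U * Matrix.diagonal (f ∘ β) * Uᵀ - V * Matrix.diagonal (f ∘ γ) * Vᵀ).PosSemidef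

/-- Squared Frobenius norm `‖M‖_F² = Σ_{i,j} M_{ij}²`. -/
noncomputable def frobSq {m l : ℕ} (M : Matrix (Fin m) (Fin l) ℝ) : ℝ :=
  ∑ i, ∑ j, (M i j) ^ 2

/-- Frobenius norm. -/
noncomputable def frobNorm {m l : ℕ} (M : Matrix (Fin m) (Fin l) ℝ) : ℝ :=
  Real.sqrt (frobSq M)

/-- The eigenvalues of a Hermitian matrix listed in nonincreasing order:
`eigsDesc hM i` is the `(i+1)`-st largest eigenvalue of `M`. -/
noncomputable def eigsDesc {m : ℕ} {M : Matrix (Fin m) (Fin m) ℝ} (hM : M.IsHermitian) :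
    Fin m → ℝ :=
  fun i => (hM.eigenvalues ∘ Tuple.sort hM.eigenvalues) i.rev

/-- The singular values of `M` in nonincreasing order: `svDesc M i` is the `(i+1)`-st largest
singular value of `M`, i.e. the square root of the `(i+1)`-st largest eigenvalue of `MᴴM`. -/
noncomputable def svDesc {m l : ℕ} (M : Matrix (Fin m) (Fin l) ℝ) : Fin l → ℝ :=
  fun i => Real.sqrt (eigsDesc (Matrix.isHermitian_conjTranspose_mul_self M) i)

/-- Nuclear norm: the sum of the singular values. -/
noncomputable def nuclearNorm {m l : ℕ} (M : Matrix (Fin m) (Fin l) ℝ) : ℝ :=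
  ∑ i, svDesc M i

/-- Operator (spectral) norm: the largest singular value. -/
noncomputable def opNorm {m l : ℕ} (M : Matrix (Fin m) (Fin l) ℝ) : ℝ :=
  ⨆ i, svDesc M i

/-- `p`-th power of the Schatten `p`-norm: `‖M‖_(p)^p = Σᵢ σᵢ(M)^p`. -/
noncomputable def schattenPow {m l : ℕ} (p : ℝ) (M : Matrix (Fin m) (Fin l) ℝ) : ℝ :=
  ∑ i, svDesc M i ^ p

/-- Schatten `p`-norm: `‖M‖_(p) = (Σᵢ σᵢ(M)^p)^(1/p)`. -/
noncomputable def schattenNorm {m l : ℕ} (p : ℝ) (M : Matrix (Fin m) (Fin l) ℝ) : ℝ :=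
  (schattenPow p M) ^ (1 / p)

/-- `P` is the orthogonal projection onto the column space of `M`. -/
def IsOrthProjOnto {m l : ℕ} (P : Matrix (Fin m) (Fin m) ℝ) (M : Matrix (Fin m) (Fin l) ℝ) :
    Prop :=
  Pᵀ = P ∧ P * P = P ∧ P * M = M ∧ ∃ Y : Matrix (Fin l) (Fin m) ℝ, P = M * Y

lemma frobSq_eq_trace {m l : ℕ} (M : Matrix (Fin m) (Fin l) ℝ) :
    frobSq M = (Mᵀ * M).trace := by
  simp only [frobSq, Matrix.trace, Matrix.diag, Matrix.mul_apply, Matrix.transpose_apply, sq]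
  rw [Finset.sum_comm]

lemma frobSq_nonneg {m l : ℕ} (M : Matrix (Fin m) (Fin l) ℝ) : 0 ≤ frobSq M := by
  apply Finset.sum_nonneg; intro i _
  exact Finset.sum_nonneg fun j _ => sq_nonneg _

lemma frobSq_add {m l : ℕ} (X Y : Matrix (Fin m) (Fin l) ℝ) :
    frobSq (X + Y) = frobSq X + frobSq Y + 2 * (Xᵀ * Y).trace := by
  rw [frobSq_eq_trace, frobSq_eq_trace, frobSq_eq_trace]
  have h : (Yᵀ * X).trace = (Xᵀ * Y).trace := by
    rw [← Matrix.trace_transpose (Yᵀ * X), Matrix.transpose_mul, Matrix.transpose_transpose]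
  simp only [Matrix.transpose_add, Matrix.add_mul, Matrix.mul_add, Matrix.trace_add, h]
  ring

/-- Pythagorean identity for two-sided compressions: for any `B`, any `Q`
with orthonormal columns, and any `C`, `‖B − QCQᵀ‖_F² = ‖B − QQᵀBQQᵀ‖_F² + ‖QᵀBQ − C‖_F²`.
Consequently, among all `QCQᵀ` with `rank C ≤ k`, the Frobenius distance to `B` is minimized
by taking `C` to be a best rank-`k` approximation of `QᵀBQ`. -/
theorem two_sided_pythagoras
    (n l k : ℕ) (B : Matrix (Fin n) (Fin n) ℝ) (Q : Matrix (Fin n) (Fin l) ℝ)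
    (hQ : Qᵀ * Q = 1) :
    (∀ C : Matrix (Fin l) (Fin l) ℝ,
      frobSq (B - Q * C * Qᵀ) =
        frobSq (B - Q * Qᵀ * B * Q * Qᵀ) + frobSq (Qᵀ * B * Q - C)) ∧
    (∀ Ck : Matrix (Fin l) (Fin l) ℝ,
      (Ck.rank ≤ k ∧ ∀ D : Matrix (Fin l) (Fin l) ℝ, D.rank ≤ k →
        frobNorm (Qᵀ * B * Q - Ck) ≤ frobNorm (Qᵀ * B * Q - D)) →
      ∀ D : Matrix (Fin l) (Fin l) ℝ, D.rank ≤ k →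
        frobNorm (B - Q * Ck * Qᵀ) ≤ frobNorm (B - Q * D * Qᵀ)) := by
  have pyth : ∀ C : Matrix (Fin l) (Fin l) ℝ,
      frobSq (B - Q * C * Qᵀ) =
        frobSq (B - Q * Qᵀ * B * Q * Qᵀ) + frobSq (Qᵀ * B * Q - C) := by
    intro C
    set E := B - Q * Qᵀ * B * Q * Qᵀ with hE
    set Y := Qᵀ * B * Q - C with hY
    have hdecomp : B - Q * C * Qᵀ = E + Q * Y * Qᵀ := by
      simp only [hE, hY, Matrix.mul_sub, Matrix.sub_mul, Matrix.mul_assoc]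
      abel
    have hcross : (Eᵀ * (Q * Y * Qᵀ)).trace = 0 := by
      have h1 : (Eᵀ * (Q * Y * Qᵀ)).trace = ((Qᵀ * Eᵀ * Q) * Y).trace := by
        rw [show Eᵀ * (Q * Y * Qᵀ) = (Eᵀ * Q * Y) * Qᵀ by
          simp only [Matrix.mul_assoc]]
        rw [Matrix.trace_mul_comm, ← Matrix.mul_assoc, ← Matrix.mul_assoc]
      have h2 : Qᵀ * Eᵀ * Q = 0 := by
        have key : Qᵀ * (Q * (Qᵀ * (Bᵀ * (Q * Qᵀ)))) * Q = Qᵀ * Bᵀ * Q := by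
          calc Qᵀ * (Q * (Qᵀ * (Bᵀ * (Q * Qᵀ)))) * Q
              = (Qᵀ * Q) * (Qᵀ * Bᵀ * Q) * (Qᵀ * Q) := by
                simp only [Matrix.mul_assoc]
            _ = Qᵀ * Bᵀ * Q := by rw [hQ]; simp
        simp only [hE, Matrix.transpose_sub, Matrix.transpose_mul,
          Matrix.transpose_transpose, Matrix.sub_mul, Matrix.mul_sub]
        rw [key]
        abel
      rw [h1, h2, Matrix.zero_mul, Matrix.trace_zero]
    have hQY : frobSq (Q * Y * Qᵀ) = frobSq Y := by
      rw [frobSq_eq_trace, frobSq_eq_trace]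
      rw [show (Q * Y * Qᵀ)ᵀ * (Q * Y * Qᵀ) = Q * (Yᵀ * ((Qᵀ * Q) * (Y * Qᵀ))) by
        simp only [Matrix.transpose_mul, Matrix.transpose_transpose, Matrix.mul_assoc]]
      rw [hQ, Matrix.one_mul, Matrix.trace_mul_comm]
      rw [show Yᵀ * (Y * Qᵀ) * Q = Yᵀ * Y by
        rw [Matrix.mul_assoc, Matrix.mul_assoc, hQ, Matrix.mul_one]]
    rw [hdecomp, frobSq_add, hcross, hQY]
    ring
  refine ⟨pyth, fun Ck hCk D hD => ?_⟩
  have h := hCk.2 D hD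
  have h2 : frobSq (Qᵀ * B * Q - Ck) ≤ frobSq (Qᵀ * B * Q - D) := by
    simp only [frobNorm] at h
    nlinarith [frobSq_nonneg (Qᵀ * B * Q - Ck), frobSq_nonneg (Qᵀ * B * Q - D),
      Real.sq_sqrt (frobSq_nonneg (Qᵀ * B * Q - Ck)),
      Real.sq_sqrt (frobSq_nonneg (Qᵀ * B * Q - D)),
      Real.sqrt_nonneg (frobSq (Qᵀ * B * Q - Ck)),
      Real.sqrt_nonneg (frobSq (Qᵀ * B * Q - D))]
  simp only [frobNorm]
  apply Real.sqrt_le_sqrt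
  rw [pyth Ck, pyth D]
  linarith
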